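/- Let h : E × E → E be a symmetric two-point flux, u : ℤ → E a sequence of states, p ≥ 1 and c_1, …, c_p ∈ ℝ. Define the matrix A indexed by l, m ∈ {−p+1, …, p} by A_{lm} = c_{|l−m|}/2 if min(l,m) ≤ 0 < max(l,m) and |l−m| ≤ p, and A_{lm} = 0 otherwise (in particular A_{ll} = 0 for all l). Then for every k ∈ ℤ the LMR flux admits the matrix representation ∑_{r=1}^{p} c_r ∑_{q=0}^{r−1} h(u_{k−q}, u_{k+r−q}) = ∑_{l=−p+1}^{p} ∑_{m=−p+1}^{p} A_{lm} · h(u_{k+l}, u_{k+m}). -/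
import Mathlib


/-- Matrix representation of the LMR flux: for a symmetric two-point flux `h`, the flux
`∑_{r=1}^{p} c_r ∑_{q=0}^{r−1} h(u_{k−q}, u_{k+r−q})` equals
`∑_{l,m=−p+1}^{p} A_{lm} h(u_{k+l}, u_{k+m})` where `A_{lm} = c_{|l−m|}/2` when
`min(l,m) ≤ 0 < max(l,m)` and `|l−m| ≤ p`, and `A_{lm} = 0` otherwise. -/
theorem lmr_flux_matrix_representation
    (N : ℕ) (hN : 1 ≤ N)
    (h : EuclideanSpace ℝ (Fin N) × EuclideanSpace ℝ (Fin N) → EuclideanSpace ℝ (Fin N))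
    (hsym : ∀ a b, h (a, b) = h (b, a))
    (u : ℤ → EuclideanSpace ℝ (Fin N))
    (p : ℕ) (hp : 1 ≤ p) (c : ℕ → ℝ)
    (A : ℤ → ℤ → ℝ)
    (hA : ∀ l m : ℤ, A l m =
      if min l m ≤ 0 ∧ 0 < max l m ∧ (l - m).natAbs ≤ p then c (l - m).natAbs / 2 else 0)
    (k : ℤ) :
    (∑ r ∈ Finset.Icc 1 p, c r •
        ∑ q ∈ Finset.range r, h (u (k - (q : ℤ)), u (k + (r : ℤ) - (q : ℤ))))
      = ∑ l ∈ Finset.Icc (-(p : ℤ) + 1) (p : ℤ), ∑ m ∈ Finset.Icc (-(p : ℤ) + 1) (p : ℤ),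
          A l m • h (u (k + l), u (k + m)) := by
  classical
  have hAsymm : ∀ l m : ℤ, A l m = A m l := by
    intro l m
    have h3 : (l - m).natAbs = (m - l).natAbs := by omega
    rw [hA, hA, min_comm, max_comm, h3]
  set S : Finset ℤ := Finset.Icc (-(p : ℤ) + 1) (p : ℤ) with hSdef
  set F : ℤ × ℤ → EuclideanSpace ℝ (Fin N) :=
    fun x => A x.1 x.2 • h (u (k + x.1), u (k + x.2)) with hF
  have hRHS : (∑ l ∈ S, ∑ m ∈ S, A l m • h (u (k + l), u (k + m))) = ∑ x ∈ S ×ˢ S, F x := by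
    rw [Finset.sum_product]
  rw [hRHS]
  have hsplit1 : ∑ x ∈ S ×ˢ S, F x
      = ∑ x ∈ (S ×ˢ S).filter (fun x => x.1 < x.2), F x
        + ∑ x ∈ (S ×ˢ S).filter (fun x => ¬ x.1 < x.2), F x :=
    (Finset.sum_filter_add_sum_filter_not _ _ _).symm
  have hsplit2 : ∑ x ∈ (S ×ˢ S).filter (fun x => ¬ x.1 < x.2), F x
      = ∑ x ∈ ((S ×ˢ S).filter (fun x => ¬ x.1 < x.2)).filter (fun x => x.2 < x.1), F x
        + ∑ x ∈ ((S ×ˢ S).filter (fun x => ¬ x.1 < x.2)).filter (fun x => ¬ x.2 < x.1), F x :=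
    (Finset.sum_filter_add_sum_filter_not _ _ _).symm
  have hdiag : ∑ x ∈ ((S ×ˢ S).filter (fun x => ¬ x.1 < x.2)).filter (fun x => ¬ x.2 < x.1), F x
      = 0 := by
    apply Finset.sum_eq_zero
    intro x hx
    simp only [Finset.mem_filter, not_lt] at hx
    have heq : x.1 = x.2 := le_antisymm hx.2 hx.1.2
    have hA0 : A x.1 x.2 = 0 := by
      rw [hA, if_neg]
      rintro ⟨h1, h2, _⟩
      rw [min_le_iff] at h1
      rw [lt_max_iff] at h2
      omega
    simp [hF, hA0]
  have hswap : ∑ x ∈ ((S ×ˢ S).filter (fun x => ¬ x.1 < x.2)).filter (fun x => x.2 < x.1), F x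
      = ∑ x ∈ (S ×ˢ S).filter (fun x => x.1 < x.2), F x := by
    apply Finset.sum_nbij' (i := fun x => (x.2, x.1)) (j := fun x => (x.2, x.1))
    · intro a ha
      simp only [Finset.mem_filter, Finset.mem_product] at ha ⊢
      obtain ⟨⟨⟨hs1, hs2⟩, _⟩, hl⟩ := ha
      exact ⟨⟨hs2, hs1⟩, hl⟩
    · intro a ha
      simp only [Finset.mem_filter, Finset.mem_product] at ha ⊢
      obtain ⟨⟨hs1, hs2⟩, hl⟩ := ha
      exact ⟨⟨⟨hs2, hs1⟩, not_lt.mpr (le_of_lt hl)⟩, hl⟩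
    · intro a _; rfl
    · intro a _; rfl
    · intro a _
      simp only [hF]
      rw [hAsymm, hsym]
  have hQsub : ∑ x ∈ (S ×ˢ S).filter (fun x => x.1 < x.2), F x
      = ∑ x ∈ (S ×ˢ S).filter (fun x => x.1 ≤ 0 ∧ 0 < x.2 ∧ (x.1 - x.2).natAbs ≤ p), F x := by
    symm
    apply Finset.sum_subset
    · intro x hx
      simp only [Finset.mem_filter] at hx ⊢
      exact ⟨hx.1, by omega⟩
    · intro x hx hnx
      simp only [Finset.mem_filter] at hx hnx
      have hlt := hx.2
      have hQn : ¬(x.1 ≤ 0 ∧ 0 < x.2 ∧ (x.1 - x.2).natAbs ≤ p) := fun hq => hnx ⟨hx.1, hq⟩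
      have hA0 : A x.1 x.2 = 0 := by
        rw [hA, if_neg]
        rintro ⟨h1, h2, h3⟩
        rw [min_le_iff] at h1
        rw [lt_max_iff] at h2
        exact hQn ⟨by omega, by omega, h3⟩
      simp [hF, hA0]
  have hT1 : ∑ x ∈ (S ×ˢ S).filter (fun x => x.1 ≤ 0 ∧ 0 < x.2 ∧ (x.1 - x.2).natAbs ≤ p), F x
      = ∑ r ∈ Finset.Icc 1 p, ∑ q ∈ Finset.range r,
          (c r / 2) • h (u (k - (q : ℤ)), u (k + (r : ℤ) - (q : ℤ))) := by
    rw [Finset.sum_sigma']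
    apply Finset.sum_nbij' (i := fun x => (⟨(x.2 - x.1).toNat, (-x.1).toNat⟩ : Σ _ : ℕ, ℕ))
      (j := fun y => ((-(y.2 : ℤ), (y.1 : ℤ) - (y.2 : ℤ)) : ℤ × ℤ))
    · intro a ha
      simp only [Finset.mem_filter, Finset.mem_product, hSdef, Finset.mem_Icc] at ha
      simp only [Finset.mem_sigma, Finset.mem_Icc, Finset.mem_range]
      omega
    · intro a ha
      simp only [Finset.mem_sigma, Finset.mem_Icc, Finset.mem_range] at ha
      simp only [Finset.mem_filter, Finset.mem_product, hSdef, Finset.mem_Icc]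
      omega
    · intro a ha
      simp only [Finset.mem_filter, Finset.mem_product, hSdef, Finset.mem_Icc] at ha
      simp only [Prod.ext_iff]
      constructor <;> omega
    · intro a ha
      simp only [Finset.mem_sigma, Finset.mem_Icc, Finset.mem_range] at ha
      obtain ⟨r, q⟩ := a
      have e1 : ((r : ℤ) - (q : ℤ) - -(q : ℤ)).toNat = r := by omega
      have e2 : (- -(q : ℤ)).toNat = q := by omega
      simp only [e1, e2]
    · intro a ha
      simp only [Finset.mem_filter, Finset.mem_product, hSdef, Finset.mem_Icc] at ha
      obtain ⟨hmem, h1, h2, h3⟩ := ha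
      have hAval : A a.1 a.2 = c (a.1 - a.2).natAbs / 2 := by
        rw [hA, if_pos]
        refine ⟨le_trans (min_le_left _ _) h1, lt_of_lt_of_le h2 (le_max_right _ _), h3⟩
      simp only [hF, hAval]
      have e1 : (a.1 - a.2).natAbs = (a.2 - a.1).toNat := by omega
      have e2 : k + a.1 = k - (((-a.1).toNat : ℕ) : ℤ) := by omega
      have e3 : k + a.2 = k + (((a.2 - a.1).toNat : ℕ) : ℤ) - (((-a.1).toNat : ℕ) : ℤ) := by
        omega
      rw [e1, e2, e3]
  rw [hsplit1, hsplit2, hdiag, hswap, hQsub, hT1, add_zero, ← Finset.sum_add_distrib]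
  refine Finset.sum_congr rfl fun r hr => ?_
  rw [Finset.smul_sum, ← Finset.sum_add_distrib]
  refine Finset.sum_congr rfl fun q hq => ?_
  rw [← add_smul]
  norm_num
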